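/- arXiv:1208.1321 — 5 statements merged into one kernel-verified Lean document; each statement's English description precedes it below -/
import Mathlib

section
/- (First derivative test) Let r and θ be real-valued functions on [a,b] with r continuous and θ continuously differentiable. Suppose θ'(x)/r(x) is positive and monotonically increasing on [a,b], and 0 < λ₁ ≤ θ'(a)/r(a). Then |∫_a^b r(x)·exp(2πi·θ(x)) dx| ≤ 1/(π·λ₁). -/
open Real intervalIntegral MeasureTheory

lemma osc_bound (a c : ℝ) (θ θ' : ℝ → ℝ) (hac : a ≤ c)
    (hθ : ∀ x ∈ Set.Icc a c, HasDerivAt θ (θ' x) x)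
    (hθ' : ContinuousOn θ' (Set.Icc a c)) :
    ‖∫ x in a..c, (θ' x : ℂ) * Complex.exp (2 * π * Complex.I * (θ x))‖ ≤ 1 / π := by
  have hπ : (2 * (π:ℂ) * Complex.I) ≠ 0 := by
    simp [Real.pi_ne_zero, Complex.I_ne_zero]
  set ψ : ℝ → ℂ := fun x => (θ' x : ℂ) * Complex.exp (2 * π * Complex.I * (θ x)) with hψ
  set h : ℝ → ℂ := fun x => Complex.exp (2 * π * Complex.I * (θ x)) / (2 * π * Complex.I) with hh
  have hθc : ContinuousOn θ (Set.Icc a c) := fun x hx => (hθ x hx).continuousAt.continuousWithinAt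
  have hψc : ContinuousOn ψ (Set.Icc a c) := by
    exact (Complex.continuous_ofReal.comp_continuousOn hθ').mul
      (Complex.continuous_exp.comp_continuousOn
        (continuousOn_const.mul (Complex.continuous_ofReal.comp_continuousOn hθc)))
  have hd : ∀ x ∈ Set.uIcc a c, HasDerivAt h (ψ x) x := by
    intro x hx
    rw [Set.uIcc_of_le hac] at hx
    have h1 : HasDerivAt (fun y : ℝ => ((θ y : ℂ))) (θ' x) x := (hθ x hx).ofReal_comp
    have h2 : HasDerivAt (fun y : ℝ => 2 * (π:ℂ) * Complex.I * (θ y)) (2 * π * Complex.I * θ' x) x :=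
      h1.const_mul _
    have h4 := h2.cexp.div_const (2 * π * Complex.I)
    refine h4.congr_deriv ?_
    rw [mul_div_assoc, mul_div_cancel_left₀ _ hπ, mul_comm]
  have hint : IntervalIntegrable ψ volume a c := by
    apply ContinuousOn.intervalIntegrable
    rwa [Set.uIcc_of_le hac]
  rw [intervalIntegral.integral_eq_sub_of_hasDerivAt hd hint]
  have hnorm : ∀ t : ℝ, ‖h t‖ = 1 / (2 * π) := by
    intro t
    simp only [hh, norm_div]
    rw [Complex.norm_exp]
    have : (2 * (π:ℂ) * Complex.I * (θ t : ℂ)).re = 0 := by simp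
    rw [this]
    simp [Real.pi_nonneg, abs_of_nonneg]
  calc ‖h c - h a‖ ≤ ‖h c‖ + ‖h a‖ := norm_sub_le _ _
    _ = 1 / π := by rw [hnorm, hnorm]; field_simp; norm_num

theorem first_derivative_test (a b lam₁ : ℝ) (hab : a < b)
    (r θ θ' : ℝ → ℝ)
    (hr : ContinuousOn r (Set.Icc a b))
    (hθ : ∀ x ∈ Set.Icc a b, HasDerivAt θ (θ' x) x)
    (hθ' : ContinuousOn θ' (Set.Icc a b))
    (hpos : ∀ x ∈ Set.Icc a b, 0 < θ' x / r x)
    (hmono : MonotoneOn (fun x => θ' x / r x) (Set.Icc a b))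
    (hlam : 0 < lam₁) (hlam₁ : lam₁ ≤ θ' a / r a) :
    ‖∫ x in a..b, (r x : ℂ) * Complex.exp (2 * π * Complex.I * (θ x))‖ ≤ 1 / (π * lam₁) := by
  have hπ : (0:ℝ) < π := pi_pos
  have hθ'ne : ∀ x ∈ Set.Icc a b, θ' x ≠ 0 := by
    intro x hx h0
    have := hpos x hx; rw [h0] at this; simp at this
  -- the decreasing positive amplitude g1 = r/θ'
  set g1 : ℝ → ℝ := fun x => r x / θ' x with hg1
  have hg1q : ∀ x, g1 x = (θ' x / r x)⁻¹ := fun x => (inv_div _ _).symm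
  have hg1pos : ∀ x ∈ Set.Icc a b, 0 < g1 x := fun x hx => by
    rw [hg1q]; exact inv_pos.2 (hpos x hx)
  have hg1anti : AntitoneOn g1 (Set.Icc a b) := by
    intro x hx y hy hxy
    rw [hg1q, hg1q]
    exact inv_anti₀ (hpos x hx) (hmono hx hy hxy)
  have hg1cont : ContinuousOn g1 (Set.Icc a b) := hr.div hθ' hθ'ne
  -- clamp to [a,b]
  set cl : ℝ → ℝ := fun x => max a (min b x) with hcl
  have hclmem : ∀ x, cl x ∈ Set.Icc a b :=
    fun x => ⟨le_max_left _ _, max_le hab.le (min_le_left _ _)⟩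
  have hclid : ∀ x ∈ Set.Icc a b, cl x = x := by
    intro x hx
    simp only [hcl]
    rw [min_eq_right hx.2, max_eq_right hx.1]
  have hclcont : Continuous cl := continuous_const.max (continuous_const.min continuous_id)
  have hclmono : Monotone cl := fun x y hxy =>
    max_le_max (le_refl a) (min_le_min (le_refl b) hxy)
  set g : ℝ → ℝ := fun x => g1 (cl x) with hg
  set ψ : ℝ → ℂ := fun x => (θ' (cl x) : ℂ) * Complex.exp (2 * π * Complex.I * (θ (cl x))) with hψ
  have hgcont : Continuous g := hg1cont.comp_continuous hclcont hclmem
  have hganti : Antitone g := fun x y hxy => hg1anti (hclmem x) (hclmem y) (hclmono hxy)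
  have hgpos : ∀ x, 0 < g x := fun x => hg1pos _ (hclmem x)
  set G : ℝ := g a with hG
  have hGpos : 0 < G := hgpos a
  have hclida : cl a = a := hclid a ⟨le_refl a, hab.le⟩
  have hga : G ≤ 1 / lam₁ := by
    have h1 : G = (θ' a / r a)⁻¹ := by
      simp only [hG, hg, hclida]; exact hg1q a
    rw [h1, one_div]
    exact inv_anti₀ hlam hlam₁
  -- continuity and bound of ψ
  have hθcont : ContinuousOn θ (Set.Icc a b) := fun x hx => (hθ x hx).continuousAt.continuousWithinAt
  have hψ1cont : ContinuousOn (fun x => (θ' x : ℂ) * Complex.exp (2 * π * Complex.I * (θ x)))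
      (Set.Icc a b) :=
    (Complex.continuous_ofReal.comp_continuousOn hθ').mul
      (Complex.continuous_exp.comp_continuousOn
        (continuousOn_const.mul (Complex.continuous_ofReal.comp_continuousOn hθcont)))
  have hψcont : Continuous ψ := hψ1cont.comp_continuous hclcont hclmem
  obtain ⟨C, hC⟩ : ∃ C, ∀ x, ‖ψ x‖ ≤ C := by
    obtain ⟨C, hC⟩ := isCompact_Icc.exists_bound_of_continuousOn hψ1cont
    exact ⟨C, fun x => hC (cl x) (hclmem x)⟩
  -- rewrite the integrand
  have key : Set.EqOn (fun x => (r x : ℂ) * Complex.exp (2 * π * Complex.I * (θ x)))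
      (fun x => g x • ψ x) (Set.Ioc a b) := by
    intro x hx
    have hx' : x ∈ Set.Icc a b := Set.Ioc_subset_Icc_self hx
    simp only [hg, hψ, hclid x hx']
    have hrx : r x = g1 x * θ' x := (div_mul_cancel₀ _ (hθ'ne x hx')).symm
    rw [Complex.real_smul, hrx]
    push_cast
    ring
  rw [intervalIntegral.integral_of_le hab.le,
    MeasureTheory.setIntegral_congr_fun measurableSet_Ioc key]
  -- the kernel for Fubini
  set K : ℝ × ℝ → ℂ := fun p => if p.1 < g p.2 then ψ p.2 else 0 with hK
  have hKind : K = Set.indicator {p : ℝ × ℝ | p.1 < g p.2} (fun p => ψ p.2) := by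
    ext p
    rw [Set.indicator_apply]
    rfl
  have hKint : Integrable K ((volume.restrict (Set.Ioo 0 G)).prod (volume.restrict (Set.Ioc a b))) := by
    constructor
    · rw [hKind]
      exact ((hψcont.comp continuous_snd).aestronglyMeasurable).indicator
        (measurableSet_lt measurable_fst (hgcont.measurable.comp measurable_snd))
    · apply MeasureTheory.HasFiniteIntegral.of_bounded (C := C)
      filter_upwards with p
      by_cases h : p.1 < g p.2 <;> simp only [hK, h, if_true, if_false]
      · exact hC p.2
      · simpa using (norm_nonneg (ψ p.2)).trans (hC p.2)
  -- layer cake: pointwise identity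
  have layer : Set.EqOn (fun x => g x • ψ x) (fun x => ∫ t in Set.Ioo 0 G, K (t, x))
      (Set.Ioc a b) := by
    intro x hx
    have h1 : ∀ t, K (t, x) = Set.indicator (Set.Iio (g x)) (fun _ => ψ x) t := by
      intro t
      rw [hK, Set.indicator_apply]
      simp [Set.mem_Iio]
    simp only
    simp_rw [h1]
    rw [MeasureTheory.setIntegral_indicator measurableSet_Iio]
    have h2 : Set.Ioo 0 G ∩ Set.Iio (g x) = Set.Ioo 0 (g x) := by
      ext t
      constructor
      · rintro ⟨⟨ht0, _⟩, htg⟩; exact ⟨ht0, htg⟩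
      · rintro ⟨ht0, htg⟩; exact ⟨⟨ht0, lt_of_lt_of_le htg (hganti hx.1.le)⟩, htg⟩
    rw [h2, MeasureTheory.setIntegral_const, Real.volume_real_Ioo_of_le (hgpos x).le, sub_zero]
  rw [MeasureTheory.setIntegral_congr_fun measurableSet_Ioc layer]
  rw [← MeasureTheory.integral_integral_swap (f := fun t x => K (t, x)) hKint]
  -- bound the inner integral via the oscillation lemma
  have inner_bound : ∀ t ∈ Set.Ioo (0:ℝ) G, ‖∫ x in Set.Ioc a b, K (t, x)‖ ≤ 1 / π := by
    intro t ht
    set S : Set ℝ := {x ∈ Set.Icc a b | t < g x} with hS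
    have haS : a ∈ S := ⟨⟨le_refl a, hab.le⟩, ht.2⟩
    have hSne : S.Nonempty := ⟨a, haS⟩
    have hSbdd : BddAbove S := ⟨b, fun x hx => hx.1.2⟩
    set c := sSup S with hc
    have hac : a ≤ c := le_csSup hSbdd haS
    have hcb : c ≤ b := csSup_le hSne (fun x hx => hx.1.2)
    have h1 : ∀ x, K (t, x) = Set.indicator {x | t < g x} ψ x := by
      intro x
      rw [hK, Set.indicator_apply]
      rfl
    simp_rw [h1]
    rw [MeasureTheory.setIntegral_indicator (measurableSet_lt measurable_const hgcont.measurable)]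
    have hsub1 : Set.Ioo a c ⊆ Set.Ioc a b ∩ {x | t < g x} := by
      intro x hx
      obtain ⟨y, hyS, hxy⟩ := exists_lt_of_lt_csSup hSne hx.2
      exact ⟨⟨hx.1, (hx.2.trans_le hcb).le⟩, lt_of_lt_of_le hyS.2 (hganti hxy.le)⟩
    have hsub2 : Set.Ioc a b ∩ {x | t < g x} ⊆ Set.Ioc a c := by
      rintro x ⟨hx1, hx2⟩
      exact ⟨hx1.1, le_csSup hSbdd ⟨Set.Ioc_subset_Icc_self hx1, hx2⟩⟩
    have haeeq : (Set.Ioc a b ∩ {x | t < g x} : Set ℝ) =ᵐ[volume] Set.Ioc a c := by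
      rw [MeasureTheory.ae_eq_set]
      constructor
      · rw [Set.diff_eq_empty.2 hsub2]; exact measure_empty
      · refine measure_mono_null ?_ (measure_singleton c)
        intro x hx
        rcases hx with ⟨hx1, hx2⟩
        have hxc : x = c := by
          by_contra hne
          exact hx2 (hsub1 ⟨hx1.1, lt_of_le_of_ne hx1.2 hne⟩)
        exact hxc
    rw [MeasureTheory.setIntegral_congr_set haeeq]
    have hpsi : Set.EqOn ψ (fun x => (θ' x : ℂ) * Complex.exp (2 * π * Complex.I * (θ x)))
        (Set.Ioc a c) := by
      intro x hx
      simp only [hψ, hclid x ⟨hx.1.le, hx.2.trans hcb⟩]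
    rw [MeasureTheory.setIntegral_congr_fun measurableSet_Ioc hpsi,
      ← intervalIntegral.integral_of_le hac]
    exact osc_bound a c θ θ' hac
      (fun x hx => hθ x ⟨hx.1, hx.2.trans hcb⟩)
      (hθ'.mono (Set.Icc_subset_Icc_right hcb))
  calc ‖∫ t in Set.Ioo (0:ℝ) G, ∫ x in Set.Ioc a b, K (t, x)‖
      ≤ (1 / π) * (volume (Set.Ioo (0:ℝ) G)).toReal := by
        apply MeasureTheory.norm_setIntegral_le_of_norm_le_const
        · rw [Real.volume_Ioo]; exact ENNReal.ofReal_lt_top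
        · exact inner_bound
    _ = (1 / π) * G := by rw [Real.volume_Ioo, sub_zero, ENNReal.toReal_ofReal hGpos.le]
    _ ≤ 1 / (π * lam₁) := by
        rw [one_div (π * lam₁), mul_inv, ← one_div π, ← one_div lam₁]
        exact mul_le_mul_of_nonneg_left hga (by positivity)
end

section
/- Let N ≥ 2 and γ ≥ 1 be reals, φ(y) = sin²(y), and G₀(y) = (N/π)·γ·sin(y) for y ∈ [0, π/2]. Then |∫_0^{π/2} φ(y)·exp(2πi·G₀(y)) dy| ≤ 2·(Nγ)^{−1/2}. -/
open Real intervalIntegral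

noncomputable def Ee (M y : ℝ) : ℂ :=
  Complex.exp (Complex.I * (2 * (M : ℂ)) * (Real.sin y : ℂ))

noncomputable def cc (M y : ℝ) : ℝ := Real.sin y ^ 2 / (2 * M * Real.cos y)

noncomputable def ccD (M y : ℝ) : ℝ :=
  (2 * Real.sin y * Real.cos y * (2 * M * Real.cos y)
      + Real.sin y ^ 2 * (2 * M * Real.sin y)) / (2 * M * Real.cos y) ^ 2

noncomputable def Hh (M y : ℝ) : ℂ := -Complex.I * (cc M y : ℂ) * Ee M y

lemma norm_Ee (M y : ℝ) : ‖Ee M y‖ = 1 := by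
  rw [Ee, Complex.norm_exp]
  simp [Complex.mul_re]

lemma abs_Ee (M y : ℝ) : ‖Ee M y‖ = 1 := by
  exact norm_Ee M y

lemma continuous_Ee (M : ℝ) : Continuous (Ee M) := by
  unfold Ee; fun_prop

lemma hasDerivAt_Ee (M y : ℝ) :
    HasDerivAt (Ee M) (Ee M y * (Complex.I * (2 * (M : ℂ)) * (Real.cos y : ℂ))) y :=
  (((Real.hasDerivAt_sin y).ofReal_comp).const_mul (Complex.I * (2 * (M : ℂ)))).cexp

lemma hasDerivAt_cc (M y : ℝ) (hM : M ≠ 0) (hy : Real.cos y ≠ 0) :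
    HasDerivAt (cc M) (ccD M y) y := by
  have h1 : HasDerivAt (fun t => Real.sin t ^ 2) (2 * Real.sin y * Real.cos y) y := by
    have := (Real.hasDerivAt_sin y).fun_pow 2
    refine this.congr_deriv ?_
    push_cast
    ring
  have h2 : HasDerivAt (fun t => 2 * M * Real.cos t) (2 * M * (-Real.sin y)) y :=
    (Real.hasDerivAt_cos y).const_mul (2 * M)
  have hne : 2 * M * Real.cos y ≠ 0 := by
    simp [hM, hy]
  have h3 := h1.div h2 hne
  refine h3.congr_deriv ?_
  rw [ccD]
  ring

lemma cc_mul (M y : ℝ) (hM : M ≠ 0) (hy : Real.cos y ≠ 0) :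
    cc M y * (2 * M * Real.cos y) = Real.sin y ^ 2 :=
  div_mul_cancel₀ _ (by simp [hM, hy])

lemma hasDerivAt_Hh (M y : ℝ) (hM : M ≠ 0) (hy : Real.cos y ≠ 0) :
    HasDerivAt (Hh M)
      (((Real.sin y : ℂ)) ^ 2 * Ee M y - Complex.I * (ccD M y : ℂ) * Ee M y) y := by
  have hc := ((hasDerivAt_cc M y hM hy).ofReal_comp).const_mul (-Complex.I)
  have h := hc.mul (hasDerivAt_Ee M y)
  refine h.congr_deriv ?_
  symm
  have hmul : ((cc M y : ℂ)) * (2 * (M : ℂ) * (Real.cos y : ℂ)) = ((Real.sin y : ℂ)) ^ 2 := by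
    exact_mod_cast congrArg (fun r : ℝ => (r : ℂ)) (cc_mul M y hM hy)
  linear_combination (-(Ee M y)) * hmul
    + (cc M y : ℂ) * (2 * (M : ℂ) * (Real.cos y : ℂ)) * Ee M y * Complex.I_mul_I

set_option maxHeartbeats 1000000 in
lemma aux_estimate (M : ℝ) (hM : 2 ≤ M) :
    ‖∫ y in (0:ℝ)..(π/2), ((Real.sin y) ^ 2 : ℂ) * Ee M y‖ ≤ 2 * M ^ (-(1:ℝ)/2) := by
  have hM0 : (0:ℝ) < M := by linarith
  have hMne : M ≠ 0 := ne_of_gt hM0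
  set δ := M ^ (-(1:ℝ)/2) with hδdef
  have hδ0 : 0 < δ := Real.rpow_pos_of_pos hM0 _
  have hδsq : δ * δ * M = 1 := by
    have h2 : δ * δ = M ^ (-(1:ℝ)) := by
      rw [hδdef, ← Real.rpow_add hM0]; norm_num
    rw [h2, Real.rpow_neg_one]
    field_simp
  clear_value δ
  have hδ1 : δ ≤ 1 := by nlinarith [mul_pos hδ0 hδ0]
  have hπ3 : (3:ℝ) < π := pi_gt_three
  set b := π/2 - δ with hbdef
  clear_value b
  have hb0 : 0 ≤ b := by rw [hbdef]; linarith
  have hbπ : b < π/2 := by rw [hbdef]; linarith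
  have huIcc : Set.uIcc (0:ℝ) b = Set.Icc 0 b := Set.uIcc_of_le hb0
  have hcos : ∀ y ∈ Set.uIcc (0:ℝ) b, 0 < Real.cos y := by
    intro y hy
    rw [huIcc] at hy
    exact Real.cos_pos_of_mem_Ioo ⟨by linarith [hy.1], by linarith [hy.2]⟩
  have hsin : ∀ y ∈ Set.uIcc (0:ℝ) b, 0 ≤ Real.sin y := by
    intro y hy
    rw [huIcc] at hy
    exact Real.sin_nonneg_of_nonneg_of_le_pi hy.1 (by linarith [hy.2])
  -- the integrand
  set F : ℝ → ℂ := fun y => ((Real.sin y) ^ 2 : ℂ) * Ee M y with hFdef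
  have hFcont : Continuous F := by
    rw [hFdef]; exact (Complex.continuous_ofReal.comp Real.continuous_sin).pow 2 |>.mul
      (continuous_Ee M)
  -- continuity of ccD on [0, b]
  have hccDcont : ContinuousOn (ccD M) (Set.uIcc (0:ℝ) b) := by
    apply ContinuousOn.div (by fun_prop) (by fun_prop)
    intro y hy
    exact pow_ne_zero _ (by have := hcos y hy; positivity)
  have hccDnonneg : ∀ y ∈ Set.uIcc (0:ℝ) b, 0 ≤ ccD M y := by
    intro y hy
    have h1 := hcos y hy
    have h2 := hsin y hy
    rw [ccD]
    apply div_nonneg _ (sq_nonneg _)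
    have e1 : 0 ≤ 2 * Real.sin y * Real.cos y * (2 * M * Real.cos y) := by positivity
    have e2 : 0 ≤ Real.sin y ^ 2 * (2 * M * Real.sin y) := by positivity
    linarith
  -- integrability pieces
  have hG : IntervalIntegrable (fun y => Complex.I * (ccD M y : ℂ) * Ee M y)
      MeasureTheory.volume 0 b := by
    apply ContinuousOn.intervalIntegrable
    exact (continuousOn_const.mul
      (Complex.continuous_ofReal.comp_continuousOn hccDcont)).mul
      (continuous_Ee M).continuousOn
  -- integration by parts identity
  have hint1 : ∫ y in (0:ℝ)..b, (F y - Complex.I * (ccD M y : ℂ) * Ee M y)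
      = Hh M b - Hh M 0 := by
    apply intervalIntegral.integral_eq_sub_of_hasDerivAt
    · intro y hy
      exact hasDerivAt_Hh M y hMne (ne_of_gt (hcos y hy))
    · exact (hFcont.intervalIntegrable 0 b).sub hG
  have hmain : ∫ y in (0:ℝ)..b, F y
      = (Hh M b - Hh M 0) + ∫ y in (0:ℝ)..b, Complex.I * (ccD M y : ℂ) * Ee M y := by
    rw [intervalIntegral.integral_sub (hFcont.intervalIntegrable 0 b) hG] at hint1
    linear_combination hint1
  -- ∫ ccD = cc b
  have hccD_int : ∫ y in (0:ℝ)..b, ccD M y = cc M b - cc M 0 := by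
    apply intervalIntegral.integral_eq_sub_of_hasDerivAt
    · intro y hy
      exact hasDerivAt_cc M y hMne (ne_of_gt (hcos y hy))
    · exact hccDcont.intervalIntegrable
  have hcc0 : cc M 0 = 0 := by simp [cc]
  have hccb_nonneg : 0 ≤ cc M b := by
    have h1 := hcos b (by rw [huIcc]; exact Set.right_mem_Icc.mpr hb0)
    rw [cc]
    positivity
  -- bound the oscillatory remainder
  have hB : ‖∫ y in (0:ℝ)..b, Complex.I * (ccD M y : ℂ) * Ee M y‖ ≤ cc M b := by
    calc ‖∫ y in (0:ℝ)..b, Complex.I * (ccD M y : ℂ) * Ee M y‖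
        ≤ ∫ y in (0:ℝ)..b, ‖Complex.I * (ccD M y : ℂ) * Ee M y‖ :=
          intervalIntegral.norm_integral_le_integral_norm hb0
      _ = ∫ y in (0:ℝ)..b, ccD M y := by
          apply intervalIntegral.integral_congr
          intro y hy
          simp [norm_mul, abs_Ee, abs_of_nonneg (hccDnonneg y hy)]
      _ = cc M b := by rw [hccD_int, hcc0, sub_zero]
  have hHb : ‖Hh M b - Hh M 0‖ = cc M b := by
    have h0 : Hh M 0 = 0 := by simp [Hh, hcc0]
    rw [h0, sub_zero, Hh]
    simp [norm_mul, abs_Ee, abs_of_nonneg hccb_nonneg]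
  have hA : ‖∫ y in (0:ℝ)..b, F y‖ ≤ cc M b + cc M b := by
    rw [hmain]
    calc ‖(Hh M b - Hh M 0) + ∫ y in (0:ℝ)..b, Complex.I * (ccD M y : ℂ) * Ee M y‖
        ≤ ‖Hh M b - Hh M 0‖ + ‖∫ y in (0:ℝ)..b, Complex.I * (ccD M y : ℂ) * Ee M y‖ :=
          norm_add_le _ _
      _ ≤ cc M b + cc M b := by rw [hHb]; exact add_le_add le_rfl hB
  -- tail bound
  have hT : ‖∫ y in b..(π/2), F y‖ ≤ δ := by
    have h := intervalIntegral.norm_integral_le_of_norm_le_const (C := 1) (f := F)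
      (a := b) (b := π/2) ?_
    · have : |π/2 - b| = δ := by rw [hbdef]; rw [abs_of_nonneg] <;> [skip; linarith] ; ring
      rw [this, one_mul] at h
      exact h
    · intro y _
      rw [hFdef]
      simp only [norm_mul, norm_Ee, mul_one, norm_pow, Complex.norm_real, Real.norm_eq_abs]
      nlinarith [Real.neg_one_le_sin y, Real.sin_le_one y, abs_nonneg (Real.sin y),
        le_abs_self (Real.sin y), neg_abs_le (Real.sin y), sq_abs (Real.sin y)]
  -- split the integral
  have hsplit : ∫ y in (0:ℝ)..(π/2), F y
      = (∫ y in (0:ℝ)..b, F y) + ∫ y in b..(π/2), F y :=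
    (intervalIntegral.integral_add_adjacent_intervals
      (hFcont.intervalIntegrable 0 b) (hFcont.intervalIntegrable b (π/2))).symm
  -- final arithmetic
  have hsinδ : 0 < Real.sin δ := Real.sin_pos_of_pos_of_lt_pi hδ0 (by linarith)
  have hccb : cc M b = Real.cos δ ^ 2 / (2 * M * Real.sin δ) := by
    rw [cc, hbdef, Real.sin_pi_div_two_sub, Real.cos_pi_div_two_sub]
  have hslow : δ * (3/4) ≤ Real.sin δ := by
    nlinarith [Real.sin_gt_sub_cube hδ0, mul_pos hδ0 hδ0]
  have hs2 : δ ^ 2 * (9/16) ≤ Real.sin δ ^ 2 := by nlinarith [hslow, hδ0, hsinδ]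
  have hkey : δ * Real.cos δ ^ 2 ≤ Real.sin δ := by
    nlinarith [Real.sin_gt_sub_cube hδ0, Real.sin_sq_add_cos_sq δ,
      mul_le_mul_of_nonneg_left hs2 hδ0.le, mul_pos hδ0 hδ0]
  have hfin : cc M b + cc M b ≤ δ := by
    rw [hccb]
    rw [← add_div, div_le_iff₀ (by positivity)]
    nlinarith [mul_le_mul_of_nonneg_left hkey (by positivity : (0:ℝ) ≤ M * δ)]
  have htotal : ‖∫ y in (0:ℝ)..(π/2), F y‖ ≤ 2 * δ :=
    calc ‖∫ y in (0:ℝ)..(π/2), F y‖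
        ≤ ‖∫ y in (0:ℝ)..b, F y‖ + ‖∫ y in b..(π/2), F y‖ := by
          rw [hsplit]; exact norm_add_le _ _
      _ ≤ (cc M b + cc M b) + δ := add_le_add hA hT
      _ ≤ δ + δ := add_le_add hfin le_rfl
      _ = 2 * δ := by ring
  exact htotal

theorem zero_order_estimate (N γ : ℝ) (hN : 2 ≤ N) (hγ : 1 ≤ γ)
    (hNγ : 4 / π^2 ≤ N * γ) :
    ‖∫ y in (0:ℝ)..(π/2), ((Real.sin y)^2 : ℂ) *
        Complex.exp (2 * π * Complex.I * ((N/π) * γ * Real.sin y))‖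
      ≤ 2 * (N * γ)^(-(1:ℝ)/2) := by
  have hM : 2 ≤ N * γ := by nlinarith
  have hπ : (π : ℂ) ≠ 0 := Complex.ofReal_ne_zero.mpr pi_ne_zero
  have heq : ∀ y ∈ Set.uIcc (0:ℝ) (π/2),
      ((Real.sin y)^2 : ℂ) * Complex.exp (2 * π * Complex.I * ((N/π) * γ * Real.sin y))
        = ((Real.sin y)^2 : ℂ) * Ee (N * γ) y := by
    intro y _
    rw [Ee]
    congr 1
    congr 1
    push_cast
    field_simp
  rw [intervalIntegral.integral_congr heq]
  exact aux_estimate (N * γ) hM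
end

section
/- Let N ≥ 2, γ ≥ 1 be reals and ν a real number with ν ≥ γ. Set φ(y) = sin²(y) and G_ν(y) = (N/π)·(γ·sin(y) − ν·y). Then |∫_0^{π/2} φ(y)·exp(2πi·G_ν(y)) dy| ≤ 4/(Nγ). -/
open Real intervalIntegral

lemma ibp_bound (N γ ν : ℝ) (H H' : ℝ → ℝ)
    (hd : ∀ y ∈ Set.uIcc (0:ℝ) (π/2), HasDerivAt H (H' y) y)
    (hc : ContinuousOn H' (Set.uIcc (0:ℝ) (π/2)))
    (hrel : ∀ y ∈ Set.uIcc (0:ℝ) (π/2),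
      H y * (2*N*(γ*Real.cos y - ν)) = (Real.sin y)^2) :
    ‖∫ y in (0:ℝ)..(π/2), ((Real.sin y)^2 : ℂ) *
        Complex.exp ((2*N*(γ*Real.sin y - ν*y) : ℝ) * Complex.I)‖
      ≤ |H 0| + |H (π/2)| + ∫ y in (0:ℝ)..(π/2), |H' y| := by
  have hab : (0:ℝ) ≤ π/2 := by positivity
  set θ : ℝ → ℝ := fun y => 2*N*(γ*Real.sin y - ν*y) with hθdef
  set E : ℝ → ℂ := fun y => Complex.exp ((θ y : ℝ) * Complex.I) with hEdef
  have hθ : ∀ y, HasDerivAt θ (2*N*(γ*Real.cos y - ν)) y := by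
    intro y
    have h1 : HasDerivAt (fun y => γ*Real.sin y - ν*y) (γ*Real.cos y - ν*1) y :=
      ((Real.hasDerivAt_sin y).const_mul γ).sub ((hasDerivAt_id y).const_mul ν)
    have := h1.const_mul (2*N)
    simpa using this
  have hθc : Continuous θ := by fun_prop
  have hE : ∀ y, HasDerivAt E (E y * (((2*N*(γ*Real.cos y - ν) : ℝ) : ℂ) * Complex.I)) y := by
    intro y
    have h1 : HasDerivAt (fun y => ((θ y : ℝ) : ℂ) * Complex.I)
        (((2*N*(γ*Real.cos y - ν) : ℝ) : ℂ) * Complex.I) y :=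
      ((hθ y).ofReal_comp).mul_const _
    exact h1.cexp
  have hEc : Continuous E := by
    apply Complex.continuous_exp.comp
    exact (Complex.continuous_ofReal.comp hθc).mul continuous_const
  have hEnorm : ∀ y, ‖E y‖ = 1 := by
    intro y
    simp [hEdef, Complex.norm_exp_ofReal_mul_I]
  set F : ℝ → ℂ := fun y => (H y : ℂ) * E y with hFdef
  set F' : ℝ → ℂ := fun y => (H' y : ℂ) * E y + ((Real.sin y)^2 : ℂ) * Complex.I * E y with hF'def
  have hF : ∀ y ∈ Set.uIcc (0:ℝ) (π/2), HasDerivAt F (F' y) y := by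
    intro y hy
    have h1 := ((hd y hy).ofReal_comp).mul (hE y)
    refine h1.congr_deriv ?_
    have h2 : ((H y : ℂ)) * ((2*N*(γ*Real.cos y - ν) : ℝ) : ℂ) = (((Real.sin y)^2 : ℝ) : ℂ) := by
      rw [← Complex.ofReal_mul, hrel y hy]
    simp only [hF'def]
    rw [show (H y : ℂ) * (E y * (((2*N*(γ*Real.cos y - ν) : ℝ) : ℂ) * Complex.I))
        = ((H y : ℂ) * ((2*N*(γ*Real.cos y - ν) : ℝ) : ℂ)) * Complex.I * E y from by ring, h2,
      Complex.ofReal_pow]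
  have hHc : ContinuousOn (fun y => (H y : ℂ)) (Set.uIcc (0:ℝ) (π/2)) := by
    apply Complex.continuous_ofReal.comp_continuousOn
    exact fun y hy => ((hd y hy).continuousAt).continuousWithinAt
  have hsinc : Continuous (fun y : ℝ => ((Real.sin y : ℂ))^2 * Complex.I * E y) :=
    (((Complex.continuous_ofReal.comp Real.continuous_sin).pow 2).mul
        continuous_const).mul hEc
  have hF'int : IntervalIntegrable F' MeasureTheory.volume 0 (π/2) := by
    apply ContinuousOn.intervalIntegrable
    apply ContinuousOn.add
    · exact (Complex.continuous_ofReal.comp_continuousOn hc).mul hEc.continuousOn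
    · exact hsinc.continuousOn
  have hIBP : ∫ y in (0:ℝ)..(π/2), F' y = F (π/2) - F 0 :=
    intervalIntegral.integral_eq_sub_of_hasDerivAt hF hF'int
  have hint1 : IntervalIntegrable (fun y => (H' y : ℂ) * E y) MeasureTheory.volume 0 (π/2) :=
    ((Complex.continuous_ofReal.comp_continuousOn hc).mul hEc.continuousOn).intervalIntegrable
  have hint2 : IntervalIntegrable (fun y => ((Real.sin y)^2 : ℂ) * Complex.I * E y)
      MeasureTheory.volume 0 (π/2) :=
    hsinc.continuousOn.intervalIntegrable
  have hsplit : (∫ y in (0:ℝ)..(π/2), F' y)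
      = (∫ y in (0:ℝ)..(π/2), (H' y : ℂ) * E y)
        + ∫ y in (0:ℝ)..(π/2), ((Real.sin y)^2 : ℂ) * Complex.I * E y := by
    exact intervalIntegral.integral_add hint1 hint2
  have hpull : (∫ y in (0:ℝ)..(π/2), ((Real.sin y)^2 : ℂ) * Complex.I * E y)
      = Complex.I * ∫ y in (0:ℝ)..(π/2), ((Real.sin y)^2 : ℂ) * E y := by
    rw [← intervalIntegral.integral_const_mul]
    congr 1; ext y; ring
  have hkey : (∫ y in (0:ℝ)..(π/2), ((Real.sin y)^2 : ℂ) * E y)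
      = (-Complex.I) * (F (π/2) - F 0 - ∫ y in (0:ℝ)..(π/2), (H' y : ℂ) * E y) := by
    have h3 : Complex.I * ∫ y in (0:ℝ)..(π/2), ((Real.sin y)^2 : ℂ) * E y
        = F (π/2) - F 0 - ∫ y in (0:ℝ)..(π/2), (H' y : ℂ) * E y := by
      rw [← hpull]
      rw [hsplit] at hIBP
      linear_combination hIBP
    have := congrArg (fun z => (-Complex.I) * z) h3
    rw [← this]
    rw [← mul_assoc]
    simp [Complex.I_mul_I]
  calc ‖∫ y in (0:ℝ)..(π/2), ((Real.sin y)^2 : ℂ) * E y‖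
      = ‖F (π/2) - F 0 - ∫ y in (0:ℝ)..(π/2), (H' y : ℂ) * E y‖ := by
        rw [hkey, norm_mul]; simp
    _ ≤ ‖F (π/2)‖ + ‖F 0‖ + ‖∫ y in (0:ℝ)..(π/2), (H' y : ℂ) * E y‖ := by
        have h4 := norm_sub_le (F (π/2) - F 0) (∫ y in (0:ℝ)..(π/2), (H' y : ℂ) * E y)
        have h5 := norm_sub_le (F (π/2)) (F 0)
        linarith
    _ ≤ |H 0| + |H (π/2)| + ∫ y in (0:ℝ)..(π/2), |H' y| := by
        have e1 : ‖F (π/2)‖ = |H (π/2)| := by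
          simp [hFdef, norm_mul, hEnorm, Complex.norm_real]
        have e2 : ‖F 0‖ = |H 0| := by
          simp [hFdef, norm_mul, hEnorm, Complex.norm_real]
        have e3 : ‖∫ y in (0:ℝ)..(π/2), (H' y : ℂ) * E y‖
            ≤ ∫ y in (0:ℝ)..(π/2), |H' y| := by
          refine le_trans (intervalIntegral.norm_integral_le_integral_norm hab) ?_
          apply le_of_eq
          apply intervalIntegral.integral_congr
          intro y _
          simp [norm_mul, hEnorm, Complex.norm_real]
        rw [e1, e2]
        linarith

set_option maxHeartbeats 1000000 in
theorem endpoint_estimate (N γ ν : ℝ) (hN : 2 ≤ N) (hγ : 1 ≤ γ) (hν : γ ≤ ν) :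
    ‖∫ y in (0:ℝ)..(π/2), ((Real.sin y)^2 : ℂ) *
        Complex.exp (2 * π * Complex.I * ((N/π) * (γ * Real.sin y - ν * y)))‖
      ≤ 4 / (N * γ) := by
  have hNγ : (0:ℝ) < N*γ := by nlinarith
  have hνpos : (0:ℝ) < ν := by linarith
  have hrw : (∫ y in (0:ℝ)..(π/2), ((Real.sin y)^2 : ℂ) *
        Complex.exp (2 * π * Complex.I * ((N/π) * (γ * Real.sin y - ν * y))))
      = ∫ y in (0:ℝ)..(π/2), ((Real.sin y)^2 : ℂ) *
        Complex.exp ((2*N*(γ*Real.sin y - ν*y) : ℝ) * Complex.I) := by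
    apply intervalIntegral.integral_congr
    intro y _
    simp only
    congr 1
    congr 1
    have hπ : (π:ℂ) ≠ 0 := Complex.ofReal_ne_zero.mpr Real.pi_ne_zero
    push_cast
    field_simp
  rw [hrw]
  rcases eq_or_lt_of_le hν with heq | hlt
  · -- case ν = γ
    subst heq
    set H : ℝ → ℝ := fun y => -(1+Real.cos y)/(2*N*γ) with hH
    set H' : ℝ → ℝ := fun y => Real.sin y/(2*N*γ) with hH'
    have hd : ∀ y ∈ Set.uIcc (0:ℝ) (π/2), HasDerivAt H (H' y) y := by
      intro y _
      have h1 : HasDerivAt (fun y => -(1+Real.cos y)) (Real.sin y) y := by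
        have := ((hasDerivAt_const y (1:ℝ)).add (Real.hasDerivAt_cos y)).neg
        refine this.congr_deriv ?_; ring
      have := h1.div_const (2*N*γ)
      convert this using 1
    have hc : ContinuousOn H' (Set.uIcc (0:ℝ) (π/2)) := by
      apply Continuous.continuousOn; fun_prop
    have hrel : ∀ y ∈ Set.uIcc (0:ℝ) (π/2),
        H y * (2*N*(γ*Real.cos y - γ)) = (Real.sin y)^2 := by
      intro y _
      simp only [hH]
      rw [Real.sin_sq]
      field_simp
      ring
    refine le_trans (ibp_bound N γ γ H H' hd hc hrel) ?_
    have h1 : (∫ y in (0:ℝ)..(π/2), |H' y|) = 1/(2*N*γ) := by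
      rw [intervalIntegral.integral_congr (g := fun y => Real.sin y/(2*N*γ)) ?_]
      · rw [intervalIntegral.integral_div, integral_sin]
        norm_num
      · intro y hy
        rw [Set.uIcc_of_le (by positivity)] at hy
        have : 0 ≤ Real.sin y := Real.sin_nonneg_of_nonneg_of_le_pi hy.1
          (le_trans hy.2 (by linarith [Real.pi_pos]))
        simp only [hH']
        rw [abs_of_nonneg (by positivity)]
    rw [h1]
    simp only [hH, Real.cos_pi_div_two, Real.cos_zero]
    rw [abs_of_nonpos (by apply div_nonpos_of_nonpos_of_nonneg <;> nlinarith),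
      abs_of_nonpos (by apply div_nonpos_of_nonpos_of_nonneg <;> nlinarith)]
    have e : -(-(1+1)/(2*N*γ)) + -(-(1+0)/(2*N*γ)) + 1/(2*N*γ) = 2/(N*γ) := by
      field_simp; ring
    rw [e]
    gcongr
    norm_num
  · -- case γ < ν
    set H : ℝ → ℝ := fun y => Real.sin y^2 / (2*N*(γ*Real.cos y - ν)) with hH
    set H' : ℝ → ℝ := fun y =>
      Real.sin y * (γ*(1-Real.cos y)^2 - 2*Real.cos y*(ν-γ)) / (2*N*(ν-γ*Real.cos y)^2) with hH'
    have hdenpos : ∀ y, 0 < ν - γ*Real.cos y := by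
      intro y; nlinarith [Real.cos_le_one y]
    have hd : ∀ y ∈ Set.uIcc (0:ℝ) (π/2), HasDerivAt H (H' y) y := by
      intro y _
      have hcos := Real.cos_le_one y
      have hne : 2*N*(γ*Real.cos y - ν) ≠ 0 :=
        ne_of_lt (mul_neg_of_pos_of_neg (by linarith) (by nlinarith))
      have hne2 : ν - γ*Real.cos y ≠ 0 := ne_of_gt (hdenpos y)
      have h1 : HasDerivAt (fun y => Real.sin y^2) (2*Real.sin y*Real.cos y) y := by
        have := (Real.hasDerivAt_sin y).pow 2
        refine this.congr_deriv ?_; ring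
      have h2 : HasDerivAt (fun y => 2*N*(γ*Real.cos y - ν)) (2*N*(γ*(-Real.sin y))) y :=
        (((Real.hasDerivAt_cos y).const_mul γ).sub_const ν).const_mul (2*N)
      have h3 := h1.div h2 hne
      refine h3.congr_deriv ?_
      simp only [hH']
      rw [Real.sin_sq]
      field_simp
      ring
    have hc : ContinuousOn H' (Set.uIcc (0:ℝ) (π/2)) := by
      apply Continuous.continuousOn
      apply Continuous.div (by fun_prop) (by fun_prop)
      intro y
      have := hdenpos y
      positivity
    have hrel : ∀ y ∈ Set.uIcc (0:ℝ) (π/2),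
        H y * (2*N*(γ*Real.cos y - ν)) = (Real.sin y)^2 := by
      intro y _
      have hne : 2*N*(γ*Real.cos y - ν) ≠ 0 :=
        ne_of_lt (mul_neg_of_pos_of_neg (by linarith) (by nlinarith [Real.cos_le_one y]))
      have hne' : γ*Real.cos y - ν ≠ 0 := fun h => hne (by rw [h, mul_zero])
      simp only [hH]
      field_simp
    refine le_trans (ibp_bound N γ ν H H' hd hc hrel) ?_
    -- boundary values
    have hH0 : H 0 = 0 := by simp [hH]
    have hHpi : |H (π/2)| = 1/(2*N*ν) := by
      simp only [hH, Real.sin_pi_div_two, Real.cos_pi_div_two]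
      rw [abs_div]
      rw [abs_of_nonneg (by norm_num), abs_of_nonpos (by nlinarith)]
      rw [show -(2*N*(γ*0 - ν)) = 2*N*ν from by ring]
      norm_num
    -- G and its derivative
    set G : ℝ → ℝ := fun y => -Real.cos y/(2*N*γ) - (ν-γ)/(N*γ*(ν-γ*Real.cos y)) with hG
    set G' : ℝ → ℝ := fun y =>
      Real.sin y/(2*N*γ) + (ν-γ)*Real.sin y/(N*(ν-γ*Real.cos y)^2) with hG'
    have hNγne : N*γ ≠ 0 := ne_of_gt hNγ
    have hdG : ∀ y, HasDerivAt G (G' y) y := by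
      intro y
      have hne2 : ν - γ*Real.cos y ≠ 0 := ne_of_gt (hdenpos y)
      have h1 : HasDerivAt (fun y => -Real.cos y/(2*N*γ)) (Real.sin y/(2*N*γ)) y := by
        have := (Real.hasDerivAt_cos y).neg.div_const (2*N*γ)
        refine this.congr_deriv ?_; ring
      have h2 : HasDerivAt (fun y => N*γ*(ν-γ*Real.cos y)) (N*γ*(0 - γ*(-Real.sin y))) y :=
        ((hasDerivAt_const y ν).sub ((Real.hasDerivAt_cos y).const_mul γ)).const_mul (N*γ)
      have h3 : HasDerivAt (fun y => (ν-γ)/(N*γ*(ν-γ*Real.cos y)))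
          ((0 * (N*γ*(ν-γ*Real.cos y)) - (ν-γ) * (N*γ*(0 - γ*(-Real.sin y))))/(N*γ*(ν-γ*Real.cos y))^2) y :=
        (hasDerivAt_const y (ν-γ)).div h2 (by
          intro h
          exact hne2 (by
            rcases mul_eq_zero.mp h with h' | h'
            · exact absurd h' hNγne
            · exact h'))
      have h4 := h1.sub h3
      refine h4.congr_deriv ?_
      simp only [hG']
      field_simp
      ring
    have hG'cont : Continuous G' := by
      apply Continuous.add
      · fun_prop
      · apply Continuous.div (by fun_prop) (by fun_prop)
        intro y
        have := hdenpos y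
        positivity
    have hH'cont : Continuous H' := by
      apply Continuous.div (by fun_prop) (by fun_prop)
      intro y
      have := hdenpos y
      positivity
    -- pointwise bound
    have hpt : ∀ y ∈ Set.Icc (0:ℝ) (π/2), |H' y| ≤ G' y := by
      intro y hy
      obtain ⟨hy0, hy1⟩ := hy
      have hs : 0 ≤ Real.sin y := Real.sin_nonneg_of_nonneg_of_le_pi hy0
        (le_trans hy1 (by linarith [Real.pi_pos]))
      have hc0 : 0 ≤ Real.cos y := Real.cos_nonneg_of_mem_Icc ⟨by linarith [Real.pi_pos], hy1⟩
      have hc1 : Real.cos y ≤ 1 := Real.cos_le_one y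
      have hdpos : 0 < ν - γ*Real.cos y := hdenpos y
      have hDpos : 0 < 2*N*(ν-γ*Real.cos y)^2 := by positivity
      have hγ1c : γ*(1-Real.cos y) ≤ ν - γ*Real.cos y := by nlinarith
      have step1 : |H' y|
          = Real.sin y * |γ*(1-Real.cos y)^2 - 2*Real.cos y*(ν-γ)| / (2*N*(ν-γ*Real.cos y)^2) := by
        simp only [hH']
        rw [abs_div, abs_mul, abs_of_nonneg hs, abs_of_pos hDpos]
      have step2 : |γ*(1-Real.cos y)^2 - 2*Real.cos y*(ν-γ)|
          ≤ γ*(1-Real.cos y)^2 + 2*Real.cos y*(ν-γ) := by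
        rw [abs_sub_le_iff]
        constructor <;> nlinarith [sq_nonneg (1-Real.cos y)]
      have hA : Real.sin y * (γ*(1-Real.cos y)^2) / (2*N*(ν-γ*Real.cos y)^2)
          ≤ Real.sin y/(2*N*γ) := by
        rw [div_le_div_iff₀ hDpos (by nlinarith)]
        nlinarith [mul_le_mul_of_nonneg_left (mul_self_le_mul_self (by nlinarith) hγ1c)
          (by positivity : (0:ℝ) ≤ 2*N*Real.sin y)]
      have hB : Real.sin y * (2*Real.cos y*(ν-γ)) / (2*N*(ν-γ*Real.cos y)^2)
          ≤ (ν-γ)*Real.sin y/(N*(ν-γ*Real.cos y)^2) := by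
        rw [div_le_div_iff₀ hDpos (by positivity)]
        nlinarith [mul_nonneg (mul_nonneg (mul_nonneg
          (by positivity : (0:ℝ) ≤ 2*N*(ν-γ*Real.cos y)^2) hs)
          (by nlinarith : (0:ℝ) ≤ ν-γ)) (by nlinarith : (0:ℝ) ≤ 1 - Real.cos y)]
      calc |H' y|
          ≤ Real.sin y * (γ*(1-Real.cos y)^2 + 2*Real.cos y*(ν-γ)) / (2*N*(ν-γ*Real.cos y)^2) := by
            rw [step1]; gcongr
        _ = Real.sin y * (γ*(1-Real.cos y)^2) / (2*N*(ν-γ*Real.cos y)^2)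
            + Real.sin y * (2*Real.cos y*(ν-γ)) / (2*N*(ν-γ*Real.cos y)^2) := by ring
        _ ≤ _ := by simp only [hG']; linarith [hA, hB]
    -- integral bound
    have hintG : (∫ y in (0:ℝ)..(π/2), G' y) = G (π/2) - G 0 :=
      intervalIntegral.integral_eq_sub_of_hasDerivAt
        (fun y _ => hdG y) hG'cont.continuousOn.intervalIntegrable
    have hmono : (∫ y in (0:ℝ)..(π/2), |H' y|) ≤ ∫ y in (0:ℝ)..(π/2), G' y :=
      intervalIntegral.integral_mono_on (by positivity)
        hH'cont.abs.continuousOn.intervalIntegrable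
        hG'cont.continuousOn.intervalIntegrable hpt
    have hGval : G (π/2) - G 0 ≤ 3/(2*(N*γ)) := by
      simp only [hG, Real.cos_pi_div_two, Real.cos_zero]
      have hνγne : ν - γ ≠ 0 := ne_of_gt (by linarith)
      have h5 : (ν-γ)/(N*γ*(ν-γ*1)) = 1/(N*γ) := by
        rw [mul_one]
        field_simp
      rw [h5]
      have h6 : 0 ≤ (ν-γ)/(N*γ*(ν-γ*0)) := by
        apply div_nonneg (by linarith)
        nlinarith
      have h7 : -0/(2*N*γ) - (ν-γ)/(N*γ*(ν-γ*0)) ≤ 0 := by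
        simp only [neg_zero, zero_div, zero_sub, neg_nonpos]
        exact h6
      have h8 : -(-1/(2*N*γ) - 1/(N*γ)) = 1/(2*N*γ) + 1/(N*γ) := by ring
      have h9 : 1/(2*N*γ) + 1/(N*γ) = 3/(2*(N*γ)) := by
        field_simp; ring
      linarith
    have hHpile : (1:ℝ)/(2*N*ν) ≤ 1/(2*(N*γ)) :=
      one_div_le_one_div_of_le (by nlinarith) (by nlinarith)
    rw [hH0, hHpi]
    simp only [abs_zero]
    have hfin : (∫ y in (0:ℝ)..(π/2), |H' y|) ≤ 3/(2*(N*γ)) := by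
      calc (∫ y in (0:ℝ)..(π/2), |H' y|) ≤ ∫ y in (0:ℝ)..(π/2), G' y := hmono
        _ = G (π/2) - G 0 := hintG
        _ ≤ 3/(2*(N*γ)) := hGval
    have h2 : (2:ℝ)/(N*γ) ≤ 4/(N*γ) := by gcongr; norm_num
    have h3 : 1/(2*(N*γ)) + 3/(2*(N*γ)) = 2/(N*γ) := by ring
    linarith
end

section
/- Let N ≥ 2, γ ≥ 1 be reals, ϱ real with |ϱ| ≤ 1/2, and ν an integer with 1 ≤ ν < ⌊γ+ϱ⌋. Set φ(y) = sin(y) and G_ν(y) = (N/π)·(γ·sin(y) + (ϱ−ν)·y). Let y_ν ∈ (0, π/2) satisfy cos(y_ν) = (ν−ϱ)/γ. Then |∫_0^{π/2} φ(y)·exp(2πi·G_ν(y)) dy| ≤ 3π/(√(Nγ)·sin(y_ν)). -/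
open Real intervalIntegral

noncomputable def PHI (A k y : ℝ) : ℝ := Real.sin y / (A * (Real.cos y - k))

noncomputable def EE (A k y : ℝ) : ℂ :=
  Complex.exp (Complex.I * ((A * (Real.sin y - k * y) : ℝ) : ℂ))

lemma norm_EE (A k y : ℝ) : ‖EE A k y‖ = 1 := by
  rw [EE, Complex.norm_exp]
  simp [Complex.mul_re]

lemma hasDerivAt_PHI (A k : ℝ) (hA : A ≠ 0) (y : ℝ) (hy : Real.cos y ≠ k) :
    HasDerivAt (PHI A k) ((1 - k * Real.cos y) / (A * (Real.cos y - k) ^ 2)) y := by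
  have h1 : HasDerivAt (fun y => Real.sin y) (Real.cos y) y := Real.hasDerivAt_sin y
  have h2 : HasDerivAt (fun y => A * (Real.cos y - k)) (A * (-Real.sin y)) y :=
    ((Real.hasDerivAt_cos y).sub_const k).const_mul A
  have hd : A * (Real.cos y - k) ≠ 0 := mul_ne_zero hA (sub_ne_zero.mpr hy)
  have := h1.div h2 hd
  refine this.congr_deriv ?_
  have hne : Real.cos y - k ≠ 0 := sub_ne_zero.mpr hy
  field_simp
  nlinarith [Real.sin_sq_add_cos_sq y]

lemma hasDerivAt_EE (A k y : ℝ) :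
    HasDerivAt (EE A k) (Complex.I * ((A * (Real.cos y - k) : ℝ) : ℂ) * EE A k y) y := by
  have h0 : HasDerivAt (fun y : ℝ => A * (Real.sin y - k * y)) (A * (Real.cos y - k)) y := by
    have := ((Real.hasDerivAt_sin y).sub ((hasDerivAt_id y).const_mul k)).const_mul A
    refine this.congr_deriv ?_; ring
  have h1 : HasDerivAt (fun y : ℝ => ((A * (Real.sin y - k * y) : ℝ) : ℂ))
      ((A * (Real.cos y - k) : ℝ) : ℂ) y := h0.ofReal_comp
  have h2 : HasDerivAt (fun y : ℝ => Complex.I * ((A * (Real.sin y - k * y) : ℝ) : ℂ))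
      (Complex.I * ((A * (Real.cos y - k) : ℝ) : ℂ)) y := h1.const_mul Complex.I
  have := h2.cexp
  simp only [EE]
  refine this.congr_deriv ?_
  ring

lemma side_bound (A k c d : ℝ) (hA : 0 < A) (hk : |k| < 1) (hcd : c ≤ d)
    (hne : ∀ y ∈ Set.Icc c d, Real.cos y ≠ k) :
    ‖∫ y in c..d, ((Real.sin y : ℝ) : ℂ) * EE A k y‖
      ≤ |PHI A k c| + |PHI A k d| + (PHI A k d - PHI A k c) := by
  have hA' : A ≠ 0 := ne_of_gt hA
  set D : ℝ → ℝ := fun y => (1 - k * Real.cos y) / (A * (Real.cos y - k) ^ 2) with hD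
  have hIcc : Set.uIcc c d = Set.Icc c d := Set.uIcc_of_le hcd
  -- derivative of PHI at points of the interval
  have hφ : ∀ y ∈ Set.Icc c d, HasDerivAt (PHI A k) (D y) y := fun y hy =>
    hasDerivAt_PHI A k hA' y (hne y hy)
  -- nonnegativity of D
  have hDpos : ∀ y, 0 ≤ 1 - k * Real.cos y := by
    intro y
    have h1 : k * Real.cos y ≤ |k * Real.cos y| := le_abs_self _
    have h2 : |k * Real.cos y| ≤ |k| := by
      rw [abs_mul]
      nlinarith [Real.abs_cos_le_one y, abs_nonneg k]
    linarith [hk]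
  have hDnn : ∀ y, 0 ≤ D y := by
    intro y
    apply div_nonneg (hDpos y)
    positivity
  -- continuity of D on the interval
  have hcont : ContinuousOn D (Set.Icc c d) := by
    apply ContinuousOn.div
    · fun_prop
    · fun_prop
    · intro y hy
      have := hne y hy
      have h2 : Real.cos y - k ≠ 0 := sub_ne_zero.mpr this
      positivity
  -- w and its derivative
  set w : ℝ → ℂ := fun y => -Complex.I * ((PHI A k y : ℝ) : ℂ) * EE A k y with hw
  set w' : ℝ → ℂ := fun y =>
    ((Real.sin y : ℝ) : ℂ) * EE A k y - Complex.I * ((D y : ℝ) : ℂ) * EE A k y with hw'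
  have hwderiv : ∀ y ∈ Set.uIcc c d, HasDerivAt w (w' y) y := by
    intro y hy
    rw [hIcc] at hy
    have h1 : HasDerivAt (fun y => -Complex.I * ((PHI A k y : ℝ) : ℂ))
        (-Complex.I * ((D y : ℝ) : ℂ)) y := ((hφ y hy).ofReal_comp).const_mul (-Complex.I)
    have h2 := hasDerivAt_EE A k y
    have h3 := h1.mul h2
    have hden : A * (Real.cos y - k) ≠ 0 := mul_ne_zero hA' (sub_ne_zero.mpr (hne y hy))
    have hφθ : PHI A k y * (A * (Real.cos y - k)) = Real.sin y := by
      rw [PHI]; field_simp [sub_ne_zero.mpr (hne y hy)]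
    refine h3.congr_deriv (Eq.symm ?_)
    have hsc : ((Real.sin y : ℝ) : ℂ) = ((PHI A k y : ℝ) : ℂ) * ((A * (Real.cos y - k) : ℝ) : ℂ) := by
      rw [← Complex.ofReal_mul, hφθ]
    show ((Real.sin y : ℝ) : ℂ) * EE A k y - Complex.I * ((D y : ℝ) : ℂ) * EE A k y = _
    rw [hsc]
    linear_combination (((PHI A k y : ℝ) : ℂ) * ((A * (Real.cos y - k) : ℝ) : ℂ) * EE A k y) * Complex.I_sq
  -- integrability
  have hcontE : Continuous (EE A k) := by
    unfold EE
    fun_prop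
  have hint1 : IntervalIntegrable (fun y => ((Real.sin y : ℝ) : ℂ) * EE A k y) MeasureTheory.volume c d := by
    apply Continuous.intervalIntegrable
    fun_prop
  have hcontD : ContinuousOn (fun y => Complex.I * ((D y : ℝ) : ℂ) * EE A k y) (Set.Icc c d) := by
    apply ContinuousOn.mul
    · exact (ContinuousOn.mul continuousOn_const (Complex.continuous_ofReal.comp_continuousOn hcont))
    · exact hcontE.continuousOn
  have hint2 : IntervalIntegrable (fun y => Complex.I * ((D y : ℝ) : ℂ) * EE A k y) MeasureTheory.volume c d := by
    apply ContinuousOn.intervalIntegrable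
    rwa [hIcc]
  have hintw' : IntervalIntegrable w' MeasureTheory.volume c d := hint1.sub hint2
  have hFTCw : ∫ y in c..d, w' y = w d - w c :=
    integral_eq_sub_of_hasDerivAt hwderiv hintw'
  have hsplit : ∫ y in c..d, w' y =
      (∫ y in c..d, ((Real.sin y : ℝ) : ℂ) * EE A k y)
      - ∫ y in c..d, Complex.I * ((D y : ℝ) : ℂ) * EE A k y := by
    simp only [hw']
    exact integral_sub hint1 hint2
  have hkey : (∫ y in c..d, ((Real.sin y : ℝ) : ℂ) * EE A k y)
      = (w d - w c) + ∫ y in c..d, Complex.I * ((D y : ℝ) : ℂ) * EE A k y := by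
    rw [← hFTCw, hsplit]; ring
  -- FTC for PHI
  have hintD : IntervalIntegrable D MeasureTheory.volume c d := by
    apply ContinuousOn.intervalIntegrable; rwa [hIcc]
  have hFTCφ : ∫ y in c..d, D y = PHI A k d - PHI A k c := by
    apply integral_eq_sub_of_hasDerivAt _ hintD
    intro y hy; rw [hIcc] at hy; exact hφ y hy
  -- norm bounds
  have hnormw : ∀ y, ‖w y‖ = |PHI A k y| := by
    intro y
    simp only [hw]
    rw [norm_mul, norm_mul, norm_EE]
    simp
  have hnormI : ‖∫ y in c..d, Complex.I * ((D y : ℝ) : ℂ) * EE A k y‖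
      ≤ PHI A k d - PHI A k c := by
    calc ‖∫ y in c..d, Complex.I * ((D y : ℝ) : ℂ) * EE A k y‖
        ≤ ∫ y in c..d, ‖Complex.I * ((D y : ℝ) : ℂ) * EE A k y‖ :=
          norm_integral_le_integral_norm hcd
      _ = ∫ y in c..d, D y := by
          apply integral_congr
          intro y hy
          simp only [norm_mul, norm_EE, mul_one, Complex.norm_I, one_mul, Complex.norm_real]
          exact abs_of_nonneg (hDnn y)
      _ = PHI A k d - PHI A k c := hFTCφ
  calc ‖∫ y in c..d, ((Real.sin y : ℝ) : ℂ) * EE A k y‖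
      ≤ ‖w d - w c‖ + ‖∫ y in c..d, Complex.I * ((D y : ℝ) : ℂ) * EE A k y‖ := by
        rw [hkey]; exact norm_add_le _ _
    _ ≤ (‖w d‖ + ‖w c‖) + (PHI A k d - PHI A k c) := by
        gcongr
        exact norm_sub_le _ _
    _ = |PHI A k c| + |PHI A k d| + (PHI A k d - PHI A k c) := by
        rw [hnormw, hnormw]; ring

lemma cos_lower_left {y z : ℝ} (hy : 0 ≤ y) (hyz : y ≤ z) (hz : z ≤ π / 2) :
    (z ^ 2 - y ^ 2) / π ≤ Real.cos y - Real.cos z := by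
  have hπ : (0:ℝ) < π := Real.pi_pos
  have key : AntitoneOn (fun t => Real.cos t + t ^ 2 / π) (Set.Icc 0 (π / 2)) := by
    apply antitoneOn_of_deriv_nonpos (convex_Icc _ _)
    · fun_prop
    · apply Differentiable.differentiableOn; fun_prop
    · intro x hx
      rw [interior_Icc, Set.mem_Ioo] at hx
      have hd : deriv (fun t => Real.cos t + t ^ 2 / π) x = -Real.sin x + 2 * x / π := by
        rw [deriv_fun_add (by fun_prop) (by fun_prop), Real.deriv_cos]
        simp [deriv_div_const, mul_comm]
      rw [hd]
      have := Real.mul_le_sin (le_of_lt hx.1) (le_of_lt hx.2)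
      have h2 : 2 / π * x = 2 * x / π := by ring
      linarith [h2 ▸ this]
  have h := key (Set.mem_Icc.mpr ⟨hy, hyz.trans hz⟩) (Set.mem_Icc.mpr ⟨hy.trans hyz, hz⟩) hyz
  simp only at h
  have : z ^ 2 / π - y ^ 2 / π ≤ Real.cos y - Real.cos z := by linarith
  calc (z ^ 2 - y ^ 2) / π = z ^ 2 / π - y ^ 2 / π := by ring
    _ ≤ _ := this

lemma cos_lower_right {z y : ℝ} (hz : 0 ≤ z) (hzy : z ≤ y) (hy : y ≤ π / 2) :
    (y - z) * Real.sin z ≤ Real.cos z - Real.cos y := by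
  have key : MonotoneOn (fun t => Real.cos z - Real.cos t - (t - z) * Real.sin z)
      (Set.Icc z (π / 2)) := by
    apply monotoneOn_of_deriv_nonneg (convex_Icc _ _)
    · fun_prop
    · apply Differentiable.differentiableOn; fun_prop
    · intro x hx
      rw [interior_Icc, Set.mem_Ioo] at hx
      have hd : deriv (fun t => Real.cos z - Real.cos t - (t - z) * Real.sin z) x
          = Real.sin x - Real.sin z := by
        rw [deriv_fun_sub (by fun_prop) (by fun_prop), deriv_fun_sub (by fun_prop) (by fun_prop)]
        simp [Real.deriv_cos]
      rw [hd, sub_nonneg]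
      apply Real.sin_le_sin_of_le_of_le_pi_div_two (by linarith [Real.pi_pos]) (le_of_lt hx.2)
        (le_of_lt hx.1)
  have h := key (Set.mem_Icc.mpr ⟨le_refl z, hzy.trans hy⟩) (Set.mem_Icc.mpr ⟨hzy, hy⟩) hzy
  simp only at h
  linarith

theorem interior_estimate (N γ ϱ : ℝ) (hN : 2 ≤ N) (hγ : 1 ≤ γ)
    (hϱ : |ϱ| ≤ 1/2) (ν : ℤ) (hν₁ : 1 ≤ ν) (hν₂ : ν < ⌊γ + ϱ⌋)
    (yν : ℝ) (hyν : yν ∈ Set.Ioo 0 (π/2)) (hcos : Real.cos yν = ((ν : ℝ) - ϱ) / γ) :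
    ‖∫ y in (0:ℝ)..(π/2), ((Real.sin y) : ℂ) *
        Complex.exp (2 * π * Complex.I * ((N/π) * (γ * Real.sin y + (ϱ - (ν : ℝ)) * y)))‖
      ≤ 3 * π / (Real.sqrt (N * γ) * Real.sin yν) := by
  obtain ⟨hy0, hy2⟩ := hyν
  have hπ : (0:ℝ) < π := Real.pi_pos
  have hγ0 : (0:ℝ) < γ := by linarith
  have hN0 : (0:ℝ) < N := by linarith
  set s := Real.sin yν with hs
  have hs0 : 0 < s := Real.sin_pos_of_pos_of_lt_pi hy0 (by linarith)
  have hs1 : s ≤ 1 := Real.sin_le_one yν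
  have hsy : s ≤ yν := Real.sin_le hy0.le
  set k := Real.cos yν with hkdef
  have hk0 : 0 < k := Real.cos_pos_of_mem_Ioo ⟨by linarith, hy2⟩
  have hks : k ^ 2 + s ^ 2 = 1 := by
    rw [hkdef, hs]; rw [add_comm]; exact Real.sin_sq_add_cos_sq yν
  have hk1 : k < 1 := by nlinarith
  have hkabs : |k| < 1 := by rw [abs_of_pos hk0]; exact hk1
  set A := 2 * N * γ with hAdef
  have hA : 0 < A := by positivity
  have hgk : γ * k = (ν : ℝ) - ϱ := by
    rw [hcos]; field_simp
  set P := N * γ with hPdef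
  have hP2 : 2 ≤ P := by nlinarith
  have hP0 : 0 < P := by linarith
  set R := Real.sqrt (P * s) with hR
  have hPs : 0 < P * s := by positivity
  have hR0 : 0 < R := Real.sqrt_pos.mpr hPs
  have hR2 : R ^ 2 = P * s := Real.sq_sqrt hPs.le
  set δ := 1 / R with hδ
  have hδ0 : 0 < δ := by positivity
  -- rewrite the integrand
  have hinteg : Set.EqOn (fun y : ℝ => ((Real.sin y : ℝ) : ℂ) *
      Complex.exp (2 * π * Complex.I * ((N/π) * (γ * Real.sin y + (ϱ - (ν : ℝ)) * y))))
      (fun y : ℝ => ((Real.sin y : ℝ) : ℂ) * EE A k y) (Set.uIcc 0 (π/2)) := by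
    intro y _
    simp only
    congr 1
    unfold EE
    congr 1
    have hreal : 2 * π * ((N/π) * (γ * Real.sin y + (ϱ - (ν : ℝ)) * y))
        = A * (Real.sin y - k * y) := by
      rw [hAdef]
      field_simp
      linear_combination y * hgk
    rw [← hreal]
    push_cast
    ring
  rw [intervalIntegral.integral_congr hinteg]
  -- split the integral
  set a := max 0 (yν - δ) with ha
  set b := min (π/2) (yν + δ) with hb
  have ha0 : 0 ≤ a := le_max_left _ _
  have hay : a ≤ yν := max_le hy0.le (by linarith)
  have hyb : yν ≤ b := le_min hy2.le (by linarith)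
  have hab : a ≤ b := hay.trans hyb
  have hb2 : b ≤ π/2 := min_le_left _ _
  have hcontEE : Continuous (EE A k) := by unfold EE; fun_prop
  have hintf : ∀ u v : ℝ, IntervalIntegrable
      (fun y => ((Real.sin y : ℝ) : ℂ) * EE A k y) MeasureTheory.volume u v := by
    intro u v
    apply Continuous.intervalIntegrable
    fun_prop
  have e2 : (∫ y in a..b, ((Real.sin y : ℝ) : ℂ) * EE A k y)
      + (∫ y in b..(π/2), ((Real.sin y : ℝ) : ℂ) * EE A k y)
      = ∫ y in a..(π/2), ((Real.sin y : ℝ) : ℂ) * EE A k y :=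
    integral_add_adjacent_intervals (hintf a b) (hintf b (π/2))
  have e1 : (∫ y in (0:ℝ)..a, ((Real.sin y : ℝ) : ℂ) * EE A k y)
      + (∫ y in a..(π/2), ((Real.sin y : ℝ) : ℂ) * EE A k y)
      = ∫ y in (0:ℝ)..(π/2), ((Real.sin y : ℝ) : ℂ) * EE A k y :=
    integral_add_adjacent_intervals (hintf 0 a) (hintf a (π/2))
  rw [← e1, ← e2]
  -- Left piece
  have hL : ‖∫ y in (0:ℝ)..a, ((Real.sin y : ℝ) : ℂ) * EE A k y‖ ≤ 2 * π / (A * δ * s) := by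
    rcases le_or_gt (yν - δ) 0 with h | h
    · have haz : a = 0 := max_eq_left h
      rw [haz, intervalIntegral.integral_same, norm_zero]
      positivity
    · have haeq : a = yν - δ := max_eq_right h.le
      have hkey : ∀ y ∈ Set.Icc 0 a, δ * s / π ≤ Real.cos y - k := by
        intro y hy
        have hya : y ≤ a := hy.2
        have hyyν : y ≤ yν := by rw [haeq] at hya; linarith
        have h1 := cos_lower_left hy.1 hyyν hy2.le
        have h2 : δ * s ≤ yν ^ 2 - y ^ 2 := by
          have hyd : y ≤ yν - δ := haeq ▸ hya
          have e : yν ^ 2 - y ^ 2 = (yν - y) * (yν + y) := by ring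
          rw [e]
          have h3 : δ ≤ yν - y := by linarith
          have h4 : s ≤ yν + y := by linarith [hy.1]
          exact mul_le_mul h3 h4 hs0.le (by linarith)
        calc δ * s / π ≤ (yν ^ 2 - y ^ 2) / π := by gcongr
          _ ≤ _ := h1
      have hne : ∀ y ∈ Set.Icc 0 a, Real.cos y ≠ k := by
        intro y hy
        have h1 := hkey y hy
        have h2 : 0 < δ * s / π := by positivity
        intro hcontra
        rw [hcontra] at h1
        linarith
      have hSB := side_bound A k 0 a hA hkabs ha0 hne
      have hφ0 : PHI A k 0 = 0 := by rw [PHI]; simp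
      have hdenpos : 0 < A * (Real.cos a - k) := by
        have := hkey a ⟨ha0, le_refl a⟩
        have : 0 < Real.cos a - k := lt_of_lt_of_le (by positivity) this
        positivity
      have hφa_nn : 0 ≤ PHI A k a := by
        rw [PHI]
        apply div_nonneg _ hdenpos.le
        apply Real.sin_nonneg_of_nonneg_of_le_pi ha0 (by linarith)
      have hφa : PHI A k a ≤ π / (A * δ * s) := by
        rw [PHI]
        rw [div_le_div_iff₀ hdenpos (by positivity)]
        have h1 : δ * s / π ≤ Real.cos a - k := hkey a ⟨ha0, le_refl a⟩
        have h2 : Real.sin a ≤ 1 := Real.sin_le_one a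
        have h3 : A * (δ * s / π) ≤ A * (Real.cos a - k) := by gcongr
        calc Real.sin a * (A * δ * s) ≤ 1 * (A * δ * s) := by gcongr
          _ = π * (A * (δ * s / π)) := by field_simp
          _ ≤ π * (A * (Real.cos a - k)) := by gcongr
      calc ‖∫ y in (0:ℝ)..a, ((Real.sin y : ℝ) : ℂ) * EE A k y‖
          ≤ |PHI A k 0| + |PHI A k a| + (PHI A k a - PHI A k 0) := hSB
        _ = 2 * PHI A k a := by rw [hφ0, abs_of_nonneg hφa_nn]; simp; ring
        _ ≤ 2 * (π / (A * δ * s)) := by gcongr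
        _ = 2 * π / (A * δ * s) := by ring
  -- Right piece
  have hRt : ‖∫ y in b..(π/2), ((Real.sin y : ℝ) : ℂ) * EE A k y‖ ≤ 3 / (A * δ * s) := by
    rcases le_or_gt (π/2) (yν + δ) with h | h
    · have hbz : b = π/2 := min_eq_left h
      rw [hbz, intervalIntegral.integral_same, norm_zero]
      positivity
    · have hbeq : b = yν + δ := min_eq_right h.le
      have hkey : ∀ y ∈ Set.Icc b (π/2), δ * s ≤ k - Real.cos y := by
        intro y hy
        have hby : b ≤ y := hy.1
        have hyνy : yν ≤ y := hyb.trans hby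
        have h1 := cos_lower_right hy0.le hyνy hy.2
        have h2 : δ ≤ y - yν := by rw [hbeq] at hby; linarith
        calc δ * s ≤ (y - yν) * s := by gcongr
          _ ≤ k - Real.cos y := h1
      have hne : ∀ y ∈ Set.Icc b (π/2), Real.cos y ≠ k := by
        intro y hy
        have h1 := hkey y hy
        have h2 : 0 < δ * s := by positivity
        intro hcontra
        rw [hcontra] at h1
        linarith
      have hSB := side_bound A k b (π/2) hA hkabs hb2 hne
      have hbge0 : 0 ≤ b := ha0.trans hab
      have hδs0 : 0 < δ * s := mul_pos hδ0 hs0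
      have habs2 : ∀ y ∈ Set.Icc b (π/2), -(1/(A*δ*s)) ≤ PHI A k y ∧ PHI A k y ≤ 0 := by
        intro y hy
        have h1 := hkey y hy
        have hsy' : 0 ≤ Real.sin y :=
          Real.sin_nonneg_of_nonneg_of_le_pi (hbge0.trans hy.1) (by linarith [hy.2])
        have hsy1 : Real.sin y ≤ 1 := Real.sin_le_one y
        have hdpos : 0 < A * (k - Real.cos y) := by
          apply mul_pos hA
          linarith
        have hPeq : PHI A k y = -(Real.sin y / (A * (k - Real.cos y))) := by
          rw [PHI, show A * (Real.cos y - k) = -(A * (k - Real.cos y)) by ring, div_neg]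
        have hle : Real.sin y / (A * (k - Real.cos y)) ≤ 1 / (A * δ * s) := by
          apply div_le_div₀ zero_le_one hsy1 (by positivity)
          calc A * δ * s = A * (δ * s) := by ring
            _ ≤ A * (k - Real.cos y) := by gcongr
        constructor
        · rw [hPeq]; linarith
        · rw [hPeq]
          exact neg_nonpos_of_nonneg (div_nonneg hsy' hdpos.le)
      obtain ⟨hbb1, hbb2⟩ := habs2 b ⟨le_refl b, hb2⟩
      obtain ⟨hpp1, hpp2⟩ := habs2 (π/2) ⟨hb2, le_refl _⟩
      calc ‖∫ y in b..(π/2), ((Real.sin y : ℝ) : ℂ) * EE A k y‖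
          ≤ |PHI A k b| + |PHI A k (π/2)| + (PHI A k (π/2) - PHI A k b) := hSB
        _ ≤ 3 / (A * δ * s) := by
            rw [abs_of_nonpos hbb2, abs_of_nonpos hpp2]
            have hx : 0 < 1/(A*δ*s) := by positivity
            have e3 : (3:ℝ)/(A*δ*s) = 3*(1/(A*δ*s)) := by ring
            rw [e3]
            linarith
  -- Middle piece
  have hM : ‖∫ y in a..b, ((Real.sin y : ℝ) : ℂ) * EE A k y‖ ≤ (s + δ) * (2 * δ) := by
    have hCb : ∀ y ∈ Set.uIoc a b, ‖((Real.sin y : ℝ) : ℂ) * EE A k y‖ ≤ s + δ := by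
      intro y hy
      rw [Set.uIoc_of_le hab] at hy
      have hya : a < y := hy.1
      have hyb' : y ≤ b := hy.2
      rw [norm_mul, norm_EE, mul_one, Complex.norm_real, Real.norm_eq_abs]
      have h0y : 0 ≤ y := le_of_lt (lt_of_le_of_lt ha0 hya)
      have hyπ : y ≤ π/2 := hyb'.trans hb2
      rw [abs_of_nonneg (Real.sin_nonneg_of_nonneg_of_le_pi h0y (by linarith))]
      rcases le_or_gt y yν with hc | hc
      · have hmono := Real.sin_le_sin_of_le_of_le_pi_div_two (by linarith) hy2.le hc
        rw [← hs] at hmono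
        linarith
      · have hsub := Real.sin_sub_sin y yν
        have h1 : Real.sin ((y - yν)/2) ≤ (y - yν)/2 := Real.sin_le (by linarith)
        have h2 : Real.cos ((y + yν)/2) ≤ 1 := Real.cos_le_one _
        have h3 : 0 ≤ Real.sin ((y - yν)/2) :=
          Real.sin_nonneg_of_nonneg_of_le_pi (by linarith) (by linarith)
        have h4 : y - yν ≤ δ := by
          have h5 : y ≤ yν + δ := hyb'.trans (min_le_right _ _)
          linarith
        have hp : Real.sin ((y - yν)/2) * Real.cos ((y + yν)/2) ≤ (y - yν)/2 :=
          (mul_le_of_le_one_right h3 h2).trans h1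
        linarith only [hsub, hp, h4, hs]
    calc ‖∫ y in a..b, ((Real.sin y : ℝ) : ℂ) * EE A k y‖
        ≤ (s + δ) * |b - a| := intervalIntegral.norm_integral_le_of_norm_le_const hCb
      _ ≤ (s + δ) * (2 * δ) := by
          rw [abs_of_nonneg (by linarith : (0:ℝ) ≤ b - a)]
          have h6 : yν - δ ≤ a := le_max_right 0 (yν - δ)
          have h7 : b ≤ yν + δ := min_le_right (π/2) (yν + δ)
          have h8 : 0 ≤ s + δ := by positivity
          have h9 : b - a ≤ 2 * δ := by linarith
          exact mul_le_mul_of_nonneg_left h9 h8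
  -- Assemble
  have hnorm3 : ‖(∫ y in (0:ℝ)..a, ((Real.sin y : ℝ) : ℂ) * EE A k y)
      + ((∫ y in a..b, ((Real.sin y : ℝ) : ℂ) * EE A k y)
        + (∫ y in b..(π/2), ((Real.sin y : ℝ) : ℂ) * EE A k y))‖
      ≤ 2 * π / (A * δ * s) + ((s + δ) * (2 * δ) + 3 / (A * δ * s)) := by
    calc ‖(∫ y in (0:ℝ)..a, ((Real.sin y : ℝ) : ℂ) * EE A k y)
        + ((∫ y in a..b, ((Real.sin y : ℝ) : ℂ) * EE A k y)
          + (∫ y in b..(π/2), ((Real.sin y : ℝ) : ℂ) * EE A k y))‖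
        ≤ ‖∫ y in (0:ℝ)..a, ((Real.sin y : ℝ) : ℂ) * EE A k y‖
          + (‖∫ y in a..b, ((Real.sin y : ℝ) : ℂ) * EE A k y‖
            + ‖∫ y in b..(π/2), ((Real.sin y : ℝ) : ℂ) * EE A k y‖) :=
          (norm_add_le _ _).trans (add_le_add_right (norm_add_le _ _) _)
      _ ≤ 2 * π / (A * δ * s) + ((s + δ) * (2 * δ) + 3 / (A * δ * s)) :=
          add_le_add hL (add_le_add hM hRt)
  refine le_trans hnorm3 ?_
  -- Final arithmetic
  have hAδs : A * δ * s = 2 * R := by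
    have hR2' : R ^ 2 = N * γ * s := by rw [hR2, hPdef]
    rw [hAdef, hδ]
    field_simp
    linear_combination (-1 : ℝ) * hR2'
  have hsqs : Real.sqrt P * s = R * Real.sqrt s := by
    rw [hR]
    conv_lhs => rw [← Real.sqrt_mul_self hs0.le]
    rw [← Real.sqrt_mul hP0.le (s*s), ← Real.sqrt_mul hPs.le s]
    congr 1
    ring
  rw [hsqs, hAδs, hδ]
  set Q := Real.sqrt s with hQ
  have hQ0 : 0 < Q := Real.sqrt_pos.mpr hs0
  have hQ1 : Q ≤ 1 := Real.sqrt_le_one.mpr hs1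
  have hRQ : 0 < R * Q := by positivity
  have hsQ : s * Q ≤ 1 := mul_le_one₀ hs1 hQ0.le hQ1
  have hsqrt2 : Real.sqrt 2 ≤ 1.5 := by
    rw [show (1.5:ℝ) = Real.sqrt (1.5^2) from (Real.sqrt_sq (by norm_num)).symm]
    exact Real.sqrt_le_sqrt (by norm_num)
  have h2R : 2 * Q ≤ Real.sqrt 2 * R := by
    have h1 : (2*Q)^2 ≤ (Real.sqrt 2 * R)^2 := by
      rw [mul_pow, mul_pow, Real.sq_sqrt (by norm_num : (0:ℝ) ≤ 2), hQ,
        Real.sq_sqrt hs0.le, hR2]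
      have h6 := mul_le_mul_of_nonneg_right hP2 hs0.le
      linarith only [h6]
    have h2 := Real.sqrt_le_sqrt h1
    rwa [Real.sqrt_sq (by positivity), Real.sqrt_sq (by positivity)] at h2
  have t1 : 2*π/(2*R) ≤ π/(R*Q) := by
    rw [div_le_div_iff₀ (by positivity) hRQ]
    have h1 := mul_le_of_le_one_right (mul_pos hπ hR0).le hQ1
    linarith only [h1]
  have t2 : (2*s)/R ≤ 2/(R*Q) := by
    rw [div_le_div_iff₀ hR0 hRQ]
    have h1 := mul_le_of_le_one_right hR0.le hsQ
    linarith only [h1]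
  have t3 : 2/(R*R) ≤ (3/2)/(R*Q) := by
    rw [div_le_div_iff₀ (by positivity) hRQ]
    have h4 : Real.sqrt 2 * R ≤ 1.5 * R := mul_le_mul_of_nonneg_right hsqrt2 hR0.le
    have h3 : 2 * Q ≤ 1.5 * R := h2R.trans h4
    have h5 := mul_le_mul_of_nonneg_right h3 hR0.le
    linarith only [h5]
  have t4 : 3/(2*R) ≤ (3/2)/(R*Q) := by
    rw [div_le_div_iff₀ (by positivity) hRQ]
    have h1 := mul_le_of_le_one_right hR0.le hQ1
    linarith only [h1]
  have e : 2*π/(2*R) + ((s + 1/R)*(2*(1/R)) + 3/(2*R))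
      = 2*π/(2*R) + (2*s)/R + 2/(R*R) + 3/(2*R) := by ring
  rw [e]
  calc 2*π/(2*R) + (2*s)/R + 2/(R*R) + 3/(2*R)
      ≤ π/(R*Q) + 2/(R*Q) + (3/2)/(R*Q) + (3/2)/(R*Q) :=
        add_le_add (add_le_add (add_le_add t1 t2) t3) t4
    _ = (π + 5)/(R*Q) := by ring
    _ ≤ 3*π/(R*Q) := by
        rw [div_le_div_iff₀ hRQ hRQ]
        have hπ3 := Real.pi_gt_three
        have h7 := mul_le_mul_of_nonneg_right (le_of_lt (show (5:ℝ) < 2*π by linarith)) hRQ.le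
        linarith only [h7]
end

section
/- (First-derivative Euler–MacLaurin formula) Let f : [a,b] → ℝ be continuously differentiable and N a positive integer. Then ∫_a^b f(x) dx = ((b−a)/(2N))·(f(a)+f(b)) + ((b−a)/N)·∑_{k=1}^{N−1} f(a + k(b−a)/N) − ((b−a)/N)·∫_a^b ( (x−a)N/(b−a) − ⌊(x−a)N/(b−a)⌋ − 1/2 )·f'(x) dx. -/
open Real intervalIntegral Finset

private lemma trap_sum (g : ℕ → ℝ) : ∀ N : ℕ, 0 < N →
    ∑ k ∈ Finset.range N, (g k + g (k + 1))
      = g 0 + g N + 2 * ∑ k ∈ Finset.Ico 1 N, g k := by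
  intro N
  induction N with
  | zero => intro h; exact absurd h (lt_irrefl 0)
  | succ n ih =>
    intro _
    rcases Nat.eq_zero_or_pos n with h0 | h0
    · subst h0; simp
    · rw [Finset.sum_range_succ, ih h0, Finset.sum_Ico_succ_top h0]
      ring

theorem euler_maclaurin_first (a b : ℝ) (hab : a < b) (N : ℕ) (hN : 0 < N)
    (f f' : ℝ → ℝ)
    (hf : ∀ x ∈ Set.Icc a b, HasDerivAt f (f' x) x)
    (hf' : ContinuousOn f' (Set.Icc a b)) :
    ∫ x in a..b, f x
      = ((b - a) / (2 * N)) * (f a + f b)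
        + ((b - a) / N) * ∑ k ∈ Finset.Ico 1 N, f (a + k * (b - a) / N)
        - ((b - a) / N) * ∫ x in a..b,
            ((x - a) * N / (b - a) - ⌊(x - a) * N / (b - a)⌋ - 1/2) * f' x := by
  have hN' : (0:ℝ) < N := Nat.cast_pos.2 hN
  have hba : (0:ℝ) < b - a := sub_pos.2 hab
  set G : ℝ → ℝ := fun x => ((x - a) * N / (b - a) - ⌊(x - a) * N / (b - a)⌋ - 1/2) * f' x
    with hGdef
  set h := (b - a) / N with hh
  have hpos : 0 < h := div_pos hba hN'
  set p : ℕ → ℝ := fun k => a + k * h with hp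
  have hp0 : p 0 = a := by simp [hp]
  have hpN : p N = b := by
    show a + (N:ℝ) * h = b
    rw [hh]; field_simp; ring
  have hstep : ∀ k : ℕ, p (k + 1) = p k + h := by
    intro k; simp only [hp]; push_cast; ring
  have hmono : Monotone p :=
    monotone_nat_of_le_succ (fun k => by rw [hstep]; linarith)
  have hle : ∀ k : ℕ, p k ≤ p (k + 1) := fun k => hmono (Nat.le_succ k)
  have hIcc : ∀ k : ℕ, k < N → Set.Icc (p k) (p (k + 1)) ⊆ Set.Icc a b := by
    intro k hk
    apply Set.Icc_subset_Icc
    · rw [← hp0]; exact hmono (Nat.zero_le k)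
    · rw [← hpN]; exact hmono hk
  have huIcc : ∀ k : ℕ, Set.uIcc (p k) (p (k + 1)) = Set.Icc (p k) (p (k + 1)) :=
    fun k => Set.uIcc_of_le (hle k)
  have hfc : ContinuousOn f (Set.Icc a b) :=
    fun x hx => (hf x hx).continuousAt.continuousWithinAt
  set m : ℕ → ℝ := fun k => (p k + p (k + 1)) / 2 with hm
  -- integration by parts on each subinterval
  have key : ∀ k : ℕ, k < N →
      ∫ x in p k..p (k + 1), f x
        = h / 2 * (f (p k) + f (p (k + 1)))
          - ∫ x in p k..p (k + 1), (x - m k) * f' x := by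
    intro k hk
    have hsub : Set.uIcc (p k) (p (k + 1)) ⊆ Set.Icc a b := by
      rw [huIcc k]; exact hIcc k hk
    have hparts := intervalIntegral.integral_mul_deriv_eq_deriv_mul
      (u := fun x => x - m k) (u' := fun _ => (1:ℝ)) (v := f) (v' := f')
      (fun x _ => (hasDerivAt_id x).sub_const _)
      (fun x hx => hf x (hsub hx))
      intervalIntegrable_const
      ((hf'.mono hsub).intervalIntegrable)
    simp only [one_mul] at hparts
    have h1 : p (k + 1) - m k = h / 2 := by rw [hm]; simp only; rw [hstep]; ring
    have h2 : p k - m k = -(h / 2) := by rw [hm]; simp only; rw [hstep]; ring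
    rw [h1, h2] at hparts
    linarith [hparts]
  -- floor computation
  have hfloor : ∀ k : ℕ, k < N → ∀ x, p k ≤ x → x < p (k + 1) →
      ⌊(x - a) * N / (b - a)⌋ = (k : ℤ) := by
    intro k hk x hx1 hx2
    have ht : (x - a) * N / (b - a) = (x - a) / h := by
      rw [hh, div_div_eq_mul_div]
    have h1 : (k:ℝ) * h ≤ x - a := by
      have : a + (k:ℝ) * h ≤ x := hx1
      linarith
    have h2 : x - a < ((k:ℝ) + 1) * h := by
      have : x < a + ((k:ℕ) + 1 : ℕ) * h := hx2
      push_cast at this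
      linarith
    rw [ht, Int.floor_eq_iff]
    constructor
    · push_cast; rw [le_div_iff₀ hpos]; linarith
    · push_cast; rw [div_lt_iff₀ hpos]; linarith
  -- pointwise identity on each subinterval
  have hpt : ∀ k : ℕ, k < N → ∀ x, p k ≤ x → x < p (k + 1) →
      (x - m k) * f' x = h * G x := by
    intro k hk x hx1 hx2
    have hfl := hfloor k hk x hx1 hx2
    have ht : h * ((x - a) * N / (b - a)) = x - a := by
      rw [hh]; field_simp
    have hmk : m k = a + (k:ℝ) * h + h / 2 := by
      rw [hm]; simp only [hp]; push_cast; ring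
    have hxm : x - m k = h * ((x - a) * N / (b - a) - (k:ℝ) - 1/2) := by
      rw [hmk, mul_sub, mul_sub, ht]; ring
    rw [hGdef]
    simp only [hfl]
    push_cast
    rw [hxm]; ring
  have hne : ∀ k : ℕ, ∀ᵐ (x : ℝ), x ≠ p (k + 1) := by
    intro k
    rw [MeasureTheory.ae_iff]
    convert MeasureTheory.measure_singleton (μ := MeasureTheory.volume) (p (k + 1)) using 2
    ext x; simp
  -- integral congruence on each subinterval
  have hGeq : ∀ k : ℕ, k < N →
      ∫ x in p k..p (k + 1), (x - m k) * f' x = h * ∫ x in p k..p (k + 1), G x := by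
    intro k hk
    rw [← intervalIntegral.integral_const_mul]
    apply intervalIntegral.integral_congr_ae
    filter_upwards [hne k] with x hx hxI
    rw [Set.uIoc_of_le (hle k)] at hxI
    exact hpt k hk x hxI.1.le (lt_of_le_of_ne hxI.2 hx)
  -- integrability of G on each subinterval
  have hGint : ∀ k : ℕ, k < N → IntervalIntegrable G MeasureTheory.volume (p k) (p (k + 1)) := by
    intro k hk
    have hsub : Set.uIcc (p k) (p (k + 1)) ⊆ Set.Icc a b := by
      rw [huIcc k]; exact hIcc k hk
    have hbase : IntervalIntegrable (fun x => (1 / h) * ((x - m k) * f' x))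
        MeasureTheory.volume (p k) (p (k + 1)) := by
      apply ContinuousOn.intervalIntegrable
      exact continuousOn_const.mul
        (((continuousOn_id.sub continuousOn_const)).mul (hf'.mono hsub))
    rw [intervalIntegrable_iff] at hbase ⊢
    apply hbase.congr
    filter_upwards [MeasureTheory.ae_restrict_mem measurableSet_uIoc,
      MeasureTheory.ae_restrict_of_ae (hne k)] with x hxI hx
    rw [Set.uIoc_of_le (hle k)] at hxI
    have := hpt k hk x hxI.1.le (lt_of_le_of_ne hxI.2 hx)
    rw [this]
    field_simp
  -- sum over subintervals
  have hfint : ∀ k : ℕ, k < N → IntervalIntegrable f MeasureTheory.volume (p k) (p (k + 1)) := by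
    intro k hk
    apply ContinuousOn.intervalIntegrable
    apply hfc.mono
    rw [huIcc k]; exact hIcc k hk
  have hsumf : ∑ k ∈ Finset.range N, ∫ x in p k..p (k + 1), f x = ∫ x in a..b, f x := by
    have := intervalIntegral.sum_integral_adjacent_intervals (a := p) (f := f) hfint
    rwa [hp0, hpN] at this
  have hsumG : ∑ k ∈ Finset.range N, ∫ x in p k..p (k + 1), G x = ∫ x in a..b, G x := by
    have := intervalIntegral.sum_integral_adjacent_intervals (a := p) (f := G) hGint
    rwa [hp0, hpN] at this
  calc ∫ x in a..b, f x
      = ∑ k ∈ Finset.range N, ∫ x in p k..p (k + 1), f x := hsumf.symm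
    _ = ∑ k ∈ Finset.range N,
          (h / 2 * (f (p k) + f (p (k + 1))) - h * ∫ x in p k..p (k + 1), G x) := by
        apply Finset.sum_congr rfl
        intro k hk
        rw [key k (Finset.mem_range.1 hk), hGeq k (Finset.mem_range.1 hk)]
    _ = h / 2 * ∑ k ∈ Finset.range N, (f (p k) + f (p (k + 1)))
          - h * ∑ k ∈ Finset.range N, ∫ x in p k..p (k + 1), G x := by
        rw [Finset.sum_sub_distrib, Finset.mul_sum, Finset.mul_sum]
    _ = h / 2 * (f a + f b + 2 * ∑ k ∈ Finset.Ico 1 N, f (p k)) - h * ∫ x in a..b, G x := by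
        rw [trap_sum (fun k => f (p k)) N hN, hsumG, hp0, hpN]
    _ = ((b - a) / (2 * N)) * (f a + f b)
        + h * ∑ k ∈ Finset.Ico 1 N, f (a + ↑k * (b - a) / N)
        - h * ∫ x in a..b, G x := by
        have hS : ∑ k ∈ Finset.Ico 1 N, f (a + ↑k * (b - a) / N)
            = ∑ k ∈ Finset.Ico 1 N, f (p k) := by
          apply Finset.sum_congr rfl
          intro k _
          congr 1
          rw [hp]; simp only [hh]; ring
        rw [hS]
        have h2N : (b - a) / (2 * N) = h / 2 := by rw [hh]; ring
        rw [h2N]; ring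
end
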